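/- For each A in the list [[4,5],[3,1]], [[2,6],[1,4]], [[3,3],[6,4]] (matrices over ℤ/7), and for each g ∈ {(1,0), (0,1), (6,6)} ⊂ (ℤ/7)², the element A·g (matrix times column vector mod 7) is not a multiple of (1,0), (0,1) or (6,6). Consequently the diagonal action φ × (φ∘A) of (ℤ/7)² on F × F is free. -/

import Mathlib

def fermatCone : Set (Fin 3 → ℂ) :=
  {v | v ≠ 0 ∧ v 0 ^ 7 + v 1 ^ 7 + v 2 ^ 7 = 0}

noncomputable def diagAct (ζ : ℂ) (g : ZMod 7 × ZMod 7) (v : Fin 3 → ℂ) : Fin 3 → ℂ :=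
  ![v 0, ζ ^ g.1.val * v 1, ζ ^ g.2.val * v 2]

def matVec (A : Matrix (Fin 2) (Fin 2) (ZMod 7)) (g : ZMod 7 × ZMod 7) :
    ZMod 7 × ZMod 7 :=
  (A 0 0 * g.1 + A 0 1 * g.2, A 1 0 * g.1 + A 1 1 * g.2)

lemma pow_val_inj {ζ : ℂ} (hζ : IsPrimitiveRoot ζ 7) {a b : ZMod 7}
    (h : ζ ^ a.val = ζ ^ b.val) : a = b :=
  ZMod.val_injective 7 (hζ.pow_inj a.val_lt b.val_lt h)

lemma matVec_smul (A : Matrix (Fin 2) (Fin 2) (ZMod 7)) (c : ZMod 7) (g : ZMod 7 × ZMod 7) :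
    matVec A (c • g) = c • matVec A g := by
  simp [matVec, Prod.smul_def, smul_eq_mul]
  constructor <;> ring

lemma stab {ζ : ℂ} (hζ : IsPrimitiveRoot ζ 7) {g : ZMod 7 × ZMod 7} {v : Fin 3 → ℂ}
    (hv : v ∈ fermatCone) {c : ℂ} (hc : c ≠ 0) (h : diagAct ζ g v = c • v) :
    g.1 = 0 ∨ g.2 = 0 ∨ g.1 = g.2 := by
  obtain ⟨hv0, hF⟩ := hv
  have h0 : v 0 = c * v 0 := by have := congrFun h 0; simpa [diagAct] using this
  have h1 : ζ ^ g.1.val * v 1 = c * v 1 := by have := congrFun h 1; simpa [diagAct] using this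
  have h2 : ζ ^ g.2.val * v 2 = c * v 2 := by have := congrFun h 2; simpa [diagAct] using this
  by_cases e0 : v 0 = 0
  · -- v1 ≠ 0 and v2 ≠ 0
    have e1 : v 1 ≠ 0 := by
      intro e1
      have e2 : v 2 = 0 := by
        have : v 2 ^ 7 = 0 := by rw [e0, e1] at hF; simpa using hF
        exact pow_eq_zero_iff (by norm_num) |>.mp this
      apply hv0; funext i; fin_cases i <;> simp [e0, e1, e2]
    have e2 : v 2 ≠ 0 := by
      intro e2
      have e1' : v 1 = 0 := by
        have : v 1 ^ 7 = 0 := by rw [e0, e2] at hF; simpa using hF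
        exact pow_eq_zero_iff (by norm_num) |>.mp this
      exact e1 e1'
    have p1 : ζ ^ g.1.val = c := by
      exact mul_right_cancel₀ e1 h1
    have p2 : ζ ^ g.2.val = c := by
      exact mul_right_cancel₀ e2 h2
    exact Or.inr (Or.inr (pow_val_inj hζ (p1.trans p2.symm)))
  · have hc1 : c = 1 := by
      have := mul_right_cancel₀ e0 (h0.symm.trans (one_mul (v 0)).symm); exact this
    by_cases e1 : v 1 = 0
    · have e2 : v 2 ≠ 0 := by
        intro e2
        apply e0
        have : v 0 ^ 7 = 0 := by rw [e1, e2] at hF; simpa using hF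
        exact pow_eq_zero_iff (by norm_num) |>.mp this
      have p2 : ζ ^ g.2.val = 1 := by
        rw [hc1] at h2; exact mul_right_cancel₀ e2 h2
      have : g.2 = 0 := pow_val_inj hζ (by simpa [ZMod.val_zero] using p2)
      exact Or.inr (Or.inl this)
    · have p1 : ζ ^ g.1.val = 1 := by
        rw [hc1] at h1; exact mul_right_cancel₀ e1 h1
      have : g.1 = 0 := pow_val_inj hζ (by simpa [ZMod.val_zero] using p1)
      exact Or.inl this

lemma rep {p : ZMod 7 × ZMod 7} (h : p.1 = 0 ∨ p.2 = 0 ∨ p.1 = p.2) :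
    ∃ (k : ZMod 7) (q : ZMod 7 × ZMod 7),
      q ∈ ({(1, 0), (0, 1), (6, 6)} : Set (ZMod 7 × ZMod 7)) ∧ p = k • q := by
  rcases h with h | h | h
  · exact ⟨p.2, (0, 1), by simp, by ext <;> simp [Prod.smul_def, h]⟩
  · exact ⟨p.1, (1, 0), by simp, by ext <;> simp [Prod.smul_def, h]⟩
  · refine ⟨-p.1, (6, 6), by simp, ?_⟩
    ext <;> simp [Prod.smul_def, ← h] <;>
      rw [show ∀ x : ZMod 7, -(x * 6) = x * (-6) from fun x => by ring,
        show (-6 : ZMod 7) = 1 by decide, mul_one]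

/-- For each `A` among `[[4,5],[3,1]]`, `[[2,6],[1,4]]`, `[[3,3],[6,4]]` (over `ℤ/7`) and
each `g ∈ {(1,0), (0,1), (6,6)}`, the vector `A·g` is not a multiple of `(1,0)`, `(0,1)`
or `(6,6)`.  Consequently the diagonal action `φ × (φ∘A)` of `(ℤ/7)²` on `F × F` is free:
no nonzero element fixes (projectively) a point of `F` on the first factor via `φ(g)` and
simultaneously a point of `F` on the second factor via `φ(A·g)`. -/
theorem twisted_diagonal_action_free (ζ : ℂ) (hζ : IsPrimitiveRoot ζ 7) :
    (∀ A ∈ ({!![4, 5; 3, 1], !![2, 6; 1, 4], !![3, 3; 6, 4]} :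
        Set (Matrix (Fin 2) (Fin 2) (ZMod 7))),
      ∀ g ∈ ({(1, 0), (0, 1), (6, 6)} : Set (ZMod 7 × ZMod 7)),
        ∀ h ∈ ({(1, 0), (0, 1), (6, 6)} : Set (ZMod 7 × ZMod 7)),
          ∀ c : ZMod 7, matVec A g ≠ c • h) ∧
    (∀ A ∈ ({!![4, 5; 3, 1], !![2, 6; 1, 4], !![3, 3; 6, 4]} :
        Set (Matrix (Fin 2) (Fin 2) (ZMod 7))),
      ∀ g : ZMod 7 × ZMod 7, g ≠ 0 → ∀ v ∈ fermatCone, ∀ w ∈ fermatCone,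
        ¬((∃ c : ℂ, c ≠ 0 ∧ diagAct ζ g v = c • v) ∧
          (∃ c : ℂ, c ≠ 0 ∧ diagAct ζ (matVec A g) w = c • w))) := by
  have part1 : ∀ A ∈ ({!![4, 5; 3, 1], !![2, 6; 1, 4], !![3, 3; 6, 4]} :
        Set (Matrix (Fin 2) (Fin 2) (ZMod 7))),
      ∀ g ∈ ({(1, 0), (0, 1), (6, 6)} : Set (ZMod 7 × ZMod 7)),
        ∀ h ∈ ({(1, 0), (0, 1), (6, 6)} : Set (ZMod 7 × ZMod 7)),
          ∀ c : ZMod 7, matVec A g ≠ c • h := by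
    intro A hA g hg h hh
    simp only [Set.mem_insert_iff, Set.mem_singleton_iff] at hA hg hh
    rcases hA with rfl | rfl | rfl <;> rcases hg with rfl | rfl | rfl <;>
      rcases hh with rfl | rfl | rfl <;> decide
  refine ⟨part1, ?_⟩
  rintro A hA g hg v hv w hw ⟨⟨c, hc, hcv⟩, ⟨d, hd, hdw⟩⟩
  obtain ⟨k, q, hq, rfl⟩ := rep (stab hζ hv hc hcv)
  obtain ⟨m, q', hq', hm⟩ := rep (stab hζ hw hd hdw)
  have hk : k ≠ 0 := fun e => hg (by rw [e, zero_smul])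
  rw [matVec_smul] at hm
  obtain ⟨y, hy⟩ := (by decide : ∀ x : ZMod 7, ¬x = 0 → ∃ y, y * x = 1) k hk
  have : matVec A q = (y * m) • q' := by
    rw [mul_smul, ← hm, ← mul_smul, hy, one_smul]
  exact part1 A hA q hq q' hq' (y * m) this
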